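/- Let n ≥ 2 and t ≥ 2, and let the n agents' additive valuations (nonnegative, each agent valuing some type positively) be pairwise distinct. Then for every m ∈ ℝ^t with m_a > 0 for all a, the set Γ(v,m) ⊆ ℝ^{(n−1)t} has positive ((n−1)t)-dimensional Lebesgue measure. -/

import Mathlib

/-- Agent `i`'s additive value for the bundle `x`. -/
def value {n t : ℕ} (v : Fin n → Fin t → ℝ) (i : Fin n) (x : Fin t → ℕ) : ℝ :=
  ∑ a, v i a * (x a : ℝ)

/-- Valuations of agents `i` and `j` are identical. -/
def Identical {n t : ℕ} (v : Fin n → Fin t → ℝ) (i j : Fin n) : Prop :=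
  ∀ x y : Fin t → ℕ, (value v i x ≥ value v i y ↔ value v j x ≥ value v j y)

/-- The feasible region `Γ(v, m)` of the reformulated LP: points
`ξ = (ξ_{k,a})`, `k ∈ {1,…,n−1}` (represented by `Fin (n-1)`, with `k : Fin (n-1)`
standing for the paper's index `k+1`), satisfying the EF constraints and the
positivity constraints with parameter `m`. -/
def Gamma (n t : ℕ) (v : Fin n → Fin t → ℝ) (m : Fin t → ℝ) :
    Set (Fin (n - 1) → Fin t → ℝ) :=
  {ξ |
    (∀ i j : Fin n, i < j →
      0 ≤ (∑ a, v i a * ∑ k, (if i.val ≤ k.val ∧ k.val < j.val then ξ k a else 0)) ∧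
      (∑ a, v j a * ∑ k, (if i.val ≤ k.val ∧ k.val < j.val then ξ k a else 0)) ≤ 0) ∧
    (∀ (i : Fin n) (a : Fin t),
      0 ≤ m a - (∑ k, (if k.val < i.val then ((k.val : ℝ) + 1) * ξ k a else 0))
          + ∑ k, (if i.val ≤ k.val then ((n : ℝ) - (k.val : ℝ) - 1) * ξ k a else 0))}

lemma identical_of_proportional {n t : ℕ} (v : Fin n → Fin t → ℝ) {i j : Fin n}
    {c : ℝ} (hc : 0 < c) (h : ∀ a, v j a = c * v i a) : Identical v i j := by
  intro x y
  have hx : ∀ z : Fin t → ℕ, value v j z = c * value v i z := by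
    intro z
    simp only [value, h, Finset.mul_sum]
    exact Finset.sum_congr rfl (fun a _ => by ring)
  rw [ge_iff_le, ge_iff_le, hx, hx, mul_le_mul_iff_right₀ hc]

lemma strict_cs {n t : ℕ} (v : Fin n → Fin t → ℝ)
    (hpos : ∀ i, ∃ a, 0 < v i a) {i j : Fin n}
    (hni : ¬ Identical v i j) :
    ∑ a, v i a * v j a <
      ‖(WithLp.equiv 2 (Fin t → ℝ)).symm (v i)‖ * ‖(WithLp.equiv 2 (Fin t → ℝ)).symm (v j)‖ := by
  set wi := (WithLp.equiv 2 (Fin t → ℝ)).symm (v i) with hwi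
  set wj := (WithLp.equiv 2 (Fin t → ℝ)).symm (v j) with hwj
  have hwa : ∀ (l : Fin n) (a : Fin t), ((WithLp.equiv 2 (Fin t → ℝ)).symm (v l)) a = v l a :=
    fun l a => rfl
  have hinner : (inner ℝ wi wj) = ∑ a, v i a * v j a := by
    rw [hwi, hwj]
    simp [PiLp.inner_apply, RCLike.inner_apply, PiLp.toLp_apply, mul_comm]
  have hle : (inner ℝ wi wj) ≤ ‖wi‖ * ‖wj‖ := real_inner_le_norm wi wj
  rcases lt_or_eq_of_le hle with h | h
  · rwa [hinner] at h
  · exfalso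
    have heq := (inner_eq_norm_mul_iff_real).mp h
    have hwine : wi ≠ 0 := by
      obtain ⟨a, ha⟩ := hpos i
      intro h0
      have : wi a = 0 := by rw [h0]; rfl
      rw [hwi, hwa] at this; linarith
    have hwjne : wj ≠ 0 := by
      obtain ⟨a, ha⟩ := hpos j
      intro h0
      have : wj a = 0 := by rw [h0]; rfl
      rw [hwj, hwa] at this; linarith
    have hNi : 0 < ‖wi‖ := norm_pos_iff.mpr hwine
    have hNj : 0 < ‖wj‖ := norm_pos_iff.mpr hwjne
    apply hni
    refine identical_of_proportional v (c := ‖wi‖⁻¹ * ‖wj‖) (by positivity) ?_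
    intro a
    have := congrArg (fun w => w a) heq
    have h1 : ‖wj‖ * v i a = ‖wi‖ * v j a := by
      simpa [hwi, hwj, hwa, PiLp.smul_apply, smul_eq_mul] using this
    field_simp
    linarith

theorem stmt_2 (n t : ℕ) (hn : 2 ≤ n) (ht : 2 ≤ t) (v : Fin n → Fin t → ℝ)
    (hnonneg : ∀ i a, 0 ≤ v i a) (hpos : ∀ i, ∃ a, 0 < v i a)
    (hdistinct : ∀ i j : Fin n, i ≠ j → ¬ Identical v i j)
    (m : Fin t → ℝ) (hm : ∀ a, 0 < m a) :
    0 < MeasureTheory.volume (Gamma n t v m) := by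
  classical
  -- minimizer points
  set P : Fin n → Fin t → ℝ :=
    fun l a => -(‖(WithLp.equiv 2 (Fin t → ℝ)).symm (v l)‖⁻¹ * v l a) with hP
  have hnormpos : ∀ l : Fin n, 0 < ‖(WithLp.equiv 2 (Fin t → ℝ)).symm (v l)‖ := by
    intro l
    apply norm_pos_iff.mpr
    obtain ⟨a, ha⟩ := hpos l
    intro h0
    have : ((WithLp.equiv 2 (Fin t → ℝ)).symm (v l)) a = 0 := by rw [h0]; rfl
    change v l a = 0 at this; linarith
  have hmin : ∀ i j : Fin n, i ≠ j →
      ∑ a, v i a * P i a < ∑ a, v i a * P j a := by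
    intro i j hij
    have hcs := strict_cs v hpos (hdistinct i j hij)
    set Ni := ‖(WithLp.equiv 2 (Fin t → ℝ)).symm (v i)‖ with hNi
    set Nj := ‖(WithLp.equiv 2 (Fin t → ℝ)).symm (v j)‖ with hNj
    have hNip : 0 < Ni := hnormpos i
    have hNjp : 0 < Nj := hnormpos j
    have hii : ∑ a, v i a * v i a = Ni ^ 2 := by
      rw [hNi, ← real_inner_self_eq_norm_sq]
      simp only [PiLp.inner_apply, RCLike.inner_apply, PiLp.toLp_apply, WithLp.equiv_symm_apply, conj_trivial]
    have hL : ∑ a, v i a * P i a = -Ni := by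
      have : ∑ a, v i a * P i a = -(Ni⁻¹ * ∑ a, v i a * v i a) := by
        simp only [hP, Finset.mul_sum, ← Finset.sum_neg_distrib]
        exact Finset.sum_congr rfl fun a _ => by ring
      rw [this, hii]
      field_simp [pow_two]
    have hR : ∑ a, v i a * P j a = -(Nj⁻¹ * ∑ a, v i a * v j a) := by
      simp only [hP, Finset.mul_sum, ← Finset.sum_neg_distrib]
      exact Finset.sum_congr rfl fun a _ => by ring
    rw [hL, hR]
    have h2 : Nj⁻¹ * (∑ a, v i a * v j a) < Nj⁻¹ * (Ni * Nj) :=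
      mul_lt_mul_of_pos_left hcs (inv_pos.mpr hNjp)
    have h3 : Nj⁻¹ * (Ni * Nj) = Ni := by field_simp
    rw [h3] at h2
    linarith
  -- the direction
  set ξs : Fin (n-1) → Fin t → ℝ :=
    fun k a => P ⟨k.val+1, by have := k.isLt; omega⟩ a - P ⟨k.val, by have := k.isLt; omega⟩ a
    with hξs
  -- telescoping
  have htel : ∀ (i j : Fin n), i.val ≤ j.val → ∀ a : Fin t,
      (∑ k : Fin (n-1), (if i.val ≤ k.val ∧ k.val < j.val then ξs k a else 0))
        = P j a - P i a := by
    intro i j hij a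
    set F : ℕ → ℝ := fun s => if h : s < n then P ⟨s, h⟩ a else 0 with hF
    have h1 : ∀ k : Fin (n-1), ξs k a = F (k.val+1) - F k.val := by
      intro k
      have hk := k.isLt
      rw [hF]
      simp only [hξs]
      rw [dif_pos (by omega : k.val + 1 < n), dif_pos (by omega : k.val < n)]
    calc (∑ k : Fin (n-1), (if i.val ≤ k.val ∧ k.val < j.val then ξs k a else 0))
        = ∑ k : Fin (n-1),
            (fun s => if i.val ≤ s ∧ s < j.val then F (s+1) - F s else 0) k.val := by
          refine Finset.sum_congr rfl fun k _ => ?_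
          simp only [h1]
      _ = ∑ k ∈ Finset.range (n-1), (if i.val ≤ k ∧ k < j.val then F (k+1) - F k else 0) :=
          Fin.sum_univ_eq_sum_range (fun s => if i.val ≤ s ∧ s < j.val then F (s+1) - F s else 0) (n-1)
      _ = ∑ k ∈ Finset.Ico i.val j.val, (F (k+1) - F k) := by
          rw [← Finset.sum_filter]
          congr 1
          ext s
          simp only [Finset.mem_filter, Finset.mem_range, Finset.mem_Ico]
          have := j.isLt
          omega
      _ = F j.val - F i.val := by
          rw [Finset.sum_Ico_eq_sub _ hij, Finset.sum_range_sub, Finset.sum_range_sub]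
          ring
      _ = P j a - P i a := by
          simp only [hF]
          rw [dif_pos j.isLt, dif_pos i.isLt]
  -- linearity under scaling for the EF sums
  have hsmul : ∀ (s : ℝ) (ξ : Fin (n-1) → Fin t → ℝ) (l i j : Fin n),
      (∑ a, v l a * ∑ k, (if i.val ≤ k.val ∧ k.val < j.val then (s • ξ) k a else 0))
        = s * ∑ a, v l a * ∑ k, (if i.val ≤ k.val ∧ k.val < j.val then ξ k a else 0) := by
    intro s ξ l i j
    rw [Finset.mul_sum]
    refine Finset.sum_congr rfl fun a _ => ?_
    have : (∑ k, (if i.val ≤ k.val ∧ k.val < j.val then (s • ξ) k a else 0))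
        = s * ∑ k, (if i.val ≤ k.val ∧ k.val < j.val then ξ k a else 0) := by
      rw [Finset.mul_sum]
      refine Finset.sum_congr rfl fun k _ => ?_
      simp only [Pi.smul_apply, smul_eq_mul]
      split_ifs <;> ring
    rw [this]; ring
  -- the open sets
  set A : Set (Fin (n-1) → Fin t → ℝ) :=
    {ξ | ∀ i j : Fin n, i < j →
      (0 < ∑ a, v i a * ∑ k, (if i.val ≤ k.val ∧ k.val < j.val then ξ k a else 0)) ∧
      ((∑ a, v j a * ∑ k, (if i.val ≤ k.val ∧ k.val < j.val then ξ k a else 0)) < 0)} with hA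
  set B : Set (Fin (n-1) → Fin t → ℝ) :=
    {ξ | ∀ (i : Fin n) (a : Fin t),
      0 < m a - (∑ k, (if k.val < i.val then ((k.val : ℝ) + 1) * ξ k a else 0))
          + ∑ k, (if i.val ≤ k.val then ((n : ℝ) - (k.val : ℝ) - 1) * ξ k a else 0)} with hB
  have hsub : A ∩ B ⊆ Gamma n t v m := by
    rintro ξ ⟨hξA, hξB⟩
    exact ⟨fun i j hij => ⟨(hξA i j hij).1.le, (hξA i j hij).2.le⟩, fun i a => (hξB i a).le⟩
  -- continuity helpers
  have hcontEF : ∀ (l i j : Fin n), Continuous (fun ξ : Fin (n-1) → Fin t → ℝ =>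
      ∑ a, v l a * ∑ k, (if i.val ≤ k.val ∧ k.val < j.val then ξ k a else 0)) := by
    intro l i j
    apply continuous_finset_sum
    intro a _
    apply Continuous.mul continuous_const
    apply continuous_finset_sum
    intro k _
    by_cases h : i.val ≤ k.val ∧ k.val < j.val
    · simp only [if_pos h]
      exact (continuous_apply a).comp (continuous_apply k)
    · simp only [if_neg h]
      exact continuous_const
  have hcontB : ∀ (i : Fin n) (a : Fin t), Continuous (fun ξ : Fin (n-1) → Fin t → ℝ =>
      m a - (∑ k, (if k.val < i.val then ((k.val : ℝ) + 1) * ξ k a else 0))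
          + ∑ k, (if i.val ≤ k.val then ((n : ℝ) - (k.val : ℝ) - 1) * ξ k a else 0)) := by
    intro i a
    apply Continuous.add
    · apply Continuous.sub continuous_const
      apply continuous_finset_sum
      intro k _
      by_cases h : k.val < i.val
      · simp only [if_pos h]
        exact Continuous.mul continuous_const ((continuous_apply a).comp (continuous_apply k))
      · simp only [if_neg h]; exact continuous_const
    · apply continuous_finset_sum
      intro k _
      by_cases h : i.val ≤ k.val
      · simp only [if_pos h]
        exact Continuous.mul continuous_const ((continuous_apply a).comp (continuous_apply k))
      · simp only [if_neg h]; exact continuous_const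
  have hAopen : IsOpen A := by
    have : A = ⋂ (i : Fin n), ⋂ (j : Fin n), {ξ : Fin (n-1) → Fin t → ℝ | i < j →
      (0 < ∑ a, v i a * ∑ k, (if i.val ≤ k.val ∧ k.val < j.val then ξ k a else 0)) ∧
      ((∑ a, v j a * ∑ k, (if i.val ≤ k.val ∧ k.val < j.val then ξ k a else 0)) < 0)} := by
      ext ξ
      simp only [hA, Set.mem_setOf_eq, Set.mem_iInter]
    rw [this]
    refine isOpen_iInter_of_finite fun i => isOpen_iInter_of_finite fun j => ?_
    by_cases hij : i < j
    · have he : {ξ : Fin (n-1) → Fin t → ℝ | i < j →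
        (0 < ∑ a, v i a * ∑ k, (if i.val ≤ k.val ∧ k.val < j.val then ξ k a else 0)) ∧
        ((∑ a, v j a * ∑ k, (if i.val ≤ k.val ∧ k.val < j.val then ξ k a else 0)) < 0)}
        = {ξ : Fin (n-1) → Fin t → ℝ |
        (0 < ∑ a, v i a * ∑ k, (if i.val ≤ k.val ∧ k.val < j.val then ξ k a else 0)) ∧
        ((∑ a, v j a * ∑ k, (if i.val ≤ k.val ∧ k.val < j.val then ξ k a else 0)) < 0)} := by
        ext ξ; simp [hij]
      rw [he]
      exact (isOpen_lt continuous_const (hcontEF i i j)).and (isOpen_lt (hcontEF j i j) continuous_const)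
    · have he : {ξ : Fin (n-1) → Fin t → ℝ | i < j →
        (0 < ∑ a, v i a * ∑ k, (if i.val ≤ k.val ∧ k.val < j.val then ξ k a else 0)) ∧
        ((∑ a, v j a * ∑ k, (if i.val ≤ k.val ∧ k.val < j.val then ξ k a else 0)) < 0)}
        = Set.univ := by
        ext ξ; simp [hij]
      rw [he]
      exact isOpen_univ
  have hBopen : IsOpen B := by
    have : B = ⋂ (i : Fin n), ⋂ (a : Fin t), {ξ : Fin (n-1) → Fin t → ℝ |
      0 < m a - (∑ k, (if k.val < i.val then ((k.val : ℝ) + 1) * ξ k a else 0))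
          + ∑ k, (if i.val ≤ k.val then ((n : ℝ) - (k.val : ℝ) - 1) * ξ k a else 0)} := by
      ext ξ
      simp only [hB, Set.mem_setOf_eq, Set.mem_iInter]
    rw [this]
    exact isOpen_iInter_of_finite fun i => isOpen_iInter_of_finite fun a =>
      isOpen_lt continuous_const (hcontB i a)
  -- ξs ∈ A
  have hξsA : ξs ∈ A := by
    intro i j hij
    have hij' : i.val ≤ j.val := le_of_lt hij
    constructor
    · have h1 : (∑ a, v i a * ∑ k, (if i.val ≤ k.val ∧ k.val < j.val then ξs k a else 0))
          = (∑ a, v i a * P j a) - (∑ a, v i a * P i a) := by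
        rw [show (∑ a, v i a * ∑ k, (if i.val ≤ k.val ∧ k.val < j.val then ξs k a else 0))
            = ∑ a, v i a * (P j a - P i a) from
          Finset.sum_congr rfl fun a _ => by rw [htel i j hij' a]]
        rw [← Finset.sum_sub_distrib]
        exact Finset.sum_congr rfl fun a _ => by ring
      rw [h1]
      have := hmin i j (ne_of_lt hij)
      linarith
    · have h1 : (∑ a, v j a * ∑ k, (if i.val ≤ k.val ∧ k.val < j.val then ξs k a else 0))
          = (∑ a, v j a * P j a) - (∑ a, v j a * P i a) := by
        rw [show (∑ a, v j a * ∑ k, (if i.val ≤ k.val ∧ k.val < j.val then ξs k a else 0))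
            = ∑ a, v j a * (P j a - P i a) from
          Finset.sum_congr rfl fun a _ => by rw [htel i j hij' a]]
        rw [← Finset.sum_sub_distrib]
        exact Finset.sum_congr rfl fun a _ => by ring
      rw [h1]
      have := hmin j i (ne_of_gt hij)
      linarith
  -- scaled versions stay in A
  have hscaleA : ∀ s : ℝ, 0 < s → s • ξs ∈ A := by
    intro s hs i j hij
    constructor
    · rw [hsmul s ξs i i j]
      exact mul_pos hs (hξsA i j hij).1
    · rw [hsmul s ξs j i j]
      exact mul_neg_of_pos_of_neg hs (hξsA i j hij).2
  -- 0 ∈ B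
  have h0B : (0 : Fin (n-1) → Fin t → ℝ) ∈ B := by
    intro i a
    simp only [Pi.zero_apply, mul_zero, ite_self, Finset.sum_const_zero, sub_zero, add_zero]
    exact hm a
  -- pick a small positive scalar
  obtain ⟨δ, hδ, hball⟩ := Metric.isOpen_iff.mp hBopen 0 h0B
  set s : ℝ := δ / (2 * (‖ξs‖ + 1)) with hs
  have hnorm_nonneg : (0:ℝ) ≤ ‖ξs‖ := norm_nonneg _
  have hspos : 0 < s := by
    rw [hs]; positivity
  have hmem : s • ξs ∈ Metric.ball (0 : Fin (n-1) → Fin t → ℝ) δ := by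
    rw [Metric.mem_ball, dist_zero_right, norm_smul, Real.norm_eq_abs, abs_of_pos hspos]
    rw [hs]
    rw [div_mul_eq_mul_div]
    rw [div_lt_iff₀ (by positivity)]
    nlinarith
  have hx0 : s • ξs ∈ A ∩ B := ⟨hscaleA s hspos, hball hmem⟩
  have hposmeas : 0 < MeasureTheory.volume (A ∩ B) :=
    (hAopen.inter hBopen).measure_pos MeasureTheory.volume ⟨s • ξs, hx0⟩
  exact lt_of_lt_of_le hposmeas (MeasureTheory.measure_mono hsub)
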